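/- Let q be an algebro-geometric KdV potential and let x₀ ∈ ℂ be a pole of q. Then x₀ is a pole of q of order exactly 2, and there exists a positive integer s such that lim_{x→x₀} (x − x₀)² q(x) = −s(s+1); i.e., the leading term of the Laurent expansion of q about x₀ is −s(s+1)(x − x₀)⁻². -/

import Mathlib

open scoped BigOperators

noncomputable section

/-- `q` is an algebro-geometric KdV potential: there are `n ∈ ℕ₀` and meromorphic functions
`f₀ ≡ 1, f₁, …, f_n` such that `F(z,x) = ∑_{j=0}^n f_{n−j}(x) zʲ` satisfies
`∂ₓ³F + 4(q − z)∂ₓF + 2q'F = 0` away from the poles. -/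
def IsAGKdVPotential (q : ℂ → ℂ) : Prop :=
  MeromorphicOn q Set.univ ∧
  ∃ (n : ℕ) (f : ℕ → ℂ → ℂ), (∀ x, f 0 x = 1) ∧
    (∀ j ≤ n, MeromorphicOn (f j) Set.univ) ∧
    ∀ (z x : ℂ), AnalyticAt ℂ q x → (∀ j ≤ n, AnalyticAt ℂ (f j) x) →
      (∑ j ∈ Finset.range (n + 1), iteratedDeriv 3 (f (n - j)) x * z ^ j)
        + 4 * (q x - z) * (∑ j ∈ Finset.range (n + 1), deriv (f (n - j)) x * z ^ j)
        + 2 * deriv q x * (∑ j ∈ Finset.range (n + 1), f (n - j) x * z ^ j) = 0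

open Filter Topology
namespace AGKdVAux

/-- Laurent-type representation: `f z = (z-x₀)^k * g z` near `x₀` with `g` analytic, `g x₀ = b`. -/
def Rep (x₀ : ℂ) (f : ℂ → ℂ) (k : ℤ) (b : ℂ) : Prop :=
  ∃ g : ℂ → ℂ, AnalyticAt ℂ g x₀ ∧ g x₀ = b ∧
    ∀ᶠ z in 𝓝[≠] x₀, f z = (z - x₀) ^ k * g z

variable {x₀ : ℂ} {f h q φ : ℂ → ℂ} {k l μ : ℤ} {a b c : ℂ}

lemma exists_open {p : ℂ → Prop} (hs : ∀ᶠ z in 𝓝[≠] x₀, p z) :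
    ∃ U : Set ℂ, IsOpen U ∧ x₀ ∈ U ∧ ∀ z ∈ U, z ≠ x₀ → p z := by
  obtain ⟨U, hU, hxU, hsub⟩ := mem_nhdsWithin.mp hs
  exact ⟨U, hU, hxU, fun z hz hne => hsub ⟨hz, hne⟩⟩

lemma analyticAt_deriv (hg : AnalyticAt ℂ f x₀) : AnalyticAt ℂ (deriv f) x₀ := by
  rcases hg.eventually_analyticAt.exists_mem with ⟨s, hs, hsub⟩
  rcases mem_nhds_iff.mp hs with ⟨V, hVs, hVo, hxV⟩
  exact (AnalyticOnNhd.deriv (fun z hz => hsub _ (hVs hz))) x₀ hxV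

lemma deriv_congr_punctured (hfg : ∀ᶠ z in 𝓝[≠] x₀, f z = h z) :
    ∀ᶠ z in 𝓝[≠] x₀, deriv f z = deriv h z := by
  obtain ⟨U, hUo, hxU, hU⟩ := exists_open hfg
  rw [eventually_nhdsWithin_iff]
  filter_upwards [hUo.mem_nhds hxU] with z hzU hz
  have hz' : z ≠ x₀ := hz
  have heq : f =ᶠ[𝓝 z] h := by
    have hV : IsOpen (U ∩ {x₀}ᶜ) := hUo.inter isOpen_compl_singleton
    filter_upwards [hV.mem_nhds ⟨hzU, hz'⟩] with w hw
    exact hU w hw.1 hw.2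
  exact heq.deriv_eq

namespace Rep

lemma congr (hf : Rep x₀ f k b) (hfg : ∀ᶠ z in 𝓝[≠] x₀, f z = h z) : Rep x₀ h k b := by
  obtain ⟨g, hg, hgx, hev⟩ := hf
  exact ⟨g, hg, hgx, by filter_upwards [hev, hfg] with z h1 h2; rw [← h2, h1]⟩

lemma cast (hf : Rep x₀ f k b) (hkl : k = l) (hbc : b = c) : Rep x₀ f l c := hkl ▸ hbc ▸ hf

lemma meromorphicAt (hf : Rep x₀ f k b) : MeromorphicAt f x₀ := by
  obtain ⟨g, hg, _, hev⟩ := hf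
  exact MeromorphicAt.iff_eventuallyEq_zpow_smul_analyticAt.mpr
    ⟨k, g, hg, by simpa [smul_eq_mul] using hev⟩

lemma order_eq (hf : Rep x₀ f k b) (hb : b ≠ 0) (hm : MeromorphicAt f x₀) :
    meromorphicOrderAt f x₀ = (k : WithTop ℤ) := by
  rw [meromorphicOrderAt_eq_int_iff hm]
  obtain ⟨g, hg, hgx, hev⟩ := hf
  exact ⟨g, hg, by simp [hgx, hb], by simpa [smul_eq_mul] using hev⟩

lemma ne_all_zero (hf : Rep x₀ f k b) (hb : b ≠ 0)
    (h0 : ∀ᶠ z in 𝓝[≠] x₀, f z = 0) : False := by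
  obtain ⟨g, hg, hgx, hev⟩ := hf
  have hb' : g x₀ ≠ 0 := by rw [hgx]; exact hb
  have hne : ∀ᶠ z in 𝓝 x₀, g z ≠ 0 := hg.continuousAt.eventually_ne hb'
  have : ∀ᶠ z in 𝓝[≠] x₀, False := by
    filter_upwards [hev, h0, hne.filter_mono nhdsWithin_le_nhds, self_mem_nhdsWithin]
      with z h1 h2 h3 h4
    have hz : z - x₀ ≠ 0 := sub_ne_zero.mpr h4
    exact (mul_ne_zero (zpow_ne_zero _ hz) h3) (by rw [← h1, h2])
  exact this.exists.elim fun _ hF => hF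

lemma deriv (hf : Rep x₀ f k b) : Rep x₀ (deriv f) (k - 1) ((k : ℂ) * b) := by
  obtain ⟨g, hg, hgx, hev⟩ := hf
  refine ⟨fun z => (k : ℂ) * g z + (z - x₀) * _root_.deriv g z,
    (analyticAt_const.mul hg).add ((analyticAt_id.sub analyticAt_const).mul
      (analyticAt_deriv hg)), by simp [hgx], ?_⟩
  obtain ⟨U, hUo, hxU, hU⟩ := exists_open hev
  obtain ⟨V, hVo, hxV, hV⟩ : ∃ V : Set ℂ, IsOpen V ∧ x₀ ∈ V ∧ ∀ z ∈ V, AnalyticAt ℂ g z := by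
    rcases hg.eventually_analyticAt.exists_mem with ⟨s, hs, hsub⟩
    rcases mem_nhds_iff.mp hs with ⟨V, hVs, hVo, hxV⟩
    exact ⟨V, hVo, hxV, fun z hz => hsub _ (hVs hz)⟩
  rw [eventually_nhdsWithin_iff]
  filter_upwards [(hUo.inter hVo).mem_nhds ⟨hxU, hxV⟩] with z hz hz0
  have hz0' : z ≠ x₀ := hz0
  have hzx : z - x₀ ≠ 0 := sub_ne_zero.mpr hz0'
  have heq : f =ᶠ[𝓝 z] fun w => (w - x₀) ^ k * g w := by
    have hW : IsOpen ((U ∩ V) ∩ {x₀}ᶜ) := (hUo.inter hVo).inter isOpen_compl_singleton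
    filter_upwards [hW.mem_nhds ⟨hz, hz0'⟩] with w hw
    exact hU w hw.1.1 hw.2
  rw [heq.deriv_eq]
  have h1 : HasDerivAt (fun w : ℂ => (w - x₀) ^ k) ((k : ℂ) * (z - x₀) ^ (k - 1)) z := by
    have := (hasDerivAt_zpow k (z - x₀) (Or.inl hzx)).comp z ((hasDerivAt_id z).sub_const x₀)
    simpa [Function.comp_def] using this
  have h2 : HasDerivAt g (_root_.deriv g z) z := (hV z hz.2).differentiableAt.hasDerivAt
  rw [show (fun w => (w - x₀) ^ k * g w) = (fun w => (w - x₀) ^ k) * g from rfl, (h1.mul h2).deriv]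
  have hzk : (z - x₀) ^ k = (z - x₀) ^ (k - 1) * (z - x₀) := by
    rw [← zpow_add_one₀ hzx, sub_add_cancel]
  rw [hzk]; ring

lemma const_mul (hf : Rep x₀ f k b) (c : ℂ) : Rep x₀ (fun z => c * f z) k (c * b) := by
  obtain ⟨g, hg, hgx, hev⟩ := hf
  exact ⟨fun z => c * g z, analyticAt_const.mul hg, by simp [hgx],
    by filter_upwards [hev] with z h1; rw [h1]; ring⟩

lemma of_const_mul (hf : Rep x₀ (fun z => c * f z) k b) (hc : c ≠ 0) :
    Rep x₀ f k (b / c) := by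
  have h1 := hf.const_mul c⁻¹
  have h2 : Rep x₀ f k (c⁻¹ * b) :=
    h1.congr (Eventually.of_forall fun z => by field_simp)
  exact h2.cast rfl (by rw [div_eq_inv_mul])

lemma add (hf : Rep x₀ f k b) (hh : Rep x₀ h k c) :
    Rep x₀ (fun z => f z + h z) k (b + c) := by
  obtain ⟨g1, hg1, hx1, he1⟩ := hf
  obtain ⟨g2, hg2, hx2, he2⟩ := hh
  exact ⟨fun z => g1 z + g2 z, hg1.add hg2, by simp [hx1, hx2],
    by filter_upwards [he1, he2] with z h1 h2; rw [h1, h2]; ring⟩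

lemma mul (hf : Rep x₀ f k b) (hh : Rep x₀ h l c) :
    Rep x₀ (fun z => f z * h z) (k + l) (b * c) := by
  obtain ⟨g1, hg1, hx1, he1⟩ := hf
  obtain ⟨g2, hg2, hx2, he2⟩ := hh
  refine ⟨fun z => g1 z * g2 z, hg1.mul hg2, by simp [hx1, hx2], ?_⟩
  filter_upwards [he1, he2, self_mem_nhdsWithin] with z h1 h2 hz
  have hzx : z - x₀ ≠ 0 := sub_ne_zero.mpr hz
  rw [h1, h2, zpow_add₀ hzx]; ring

lemma lower (hf : Rep x₀ f k b) (hl : l < k) : Rep x₀ f l 0 := by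
  obtain ⟨g, hg, hgx, hev⟩ := hf
  refine ⟨fun z => (z - x₀) ^ (k - l).toNat * g z,
    (((analyticAt_id.sub analyticAt_const).pow _).mul hg), ?_, ?_⟩
  · simp [zero_pow (show (k - l).toNat ≠ 0 by omega)]
  · filter_upwards [hev, self_mem_nhdsWithin] with z h1 h2
    have hzx : z - x₀ ≠ 0 := sub_ne_zero.mpr h2
    rw [h1, ← mul_assoc, ← zpow_natCast (z - x₀) (k - l).toNat, ← zpow_add₀ hzx]
    congr 2
    omega

lemma val_unique (h1 : Rep x₀ f k b) (h2 : Rep x₀ f k c) : b = c := by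
  obtain ⟨g1, hg1, hx1, he1⟩ := h1
  obtain ⟨g2, hg2, hx2, he2⟩ := h2
  have heq : ∀ᶠ z in 𝓝[≠] x₀, g1 z = g2 z := by
    filter_upwards [he1, he2, self_mem_nhdsWithin] with z e1 e2 hz
    have hzx : z - x₀ ≠ 0 := sub_ne_zero.mpr hz
    exact mul_left_cancel₀ (zpow_ne_zero _ hzx) (by rw [← e1, ← e2])
  have t1 : Tendsto g1 (𝓝[≠] x₀) (𝓝 b) := hx1 ▸ (hg1.continuousAt.continuousWithinAt).tendsto
  have t2 : Tendsto g2 (𝓝[≠] x₀) (𝓝 c) := hx2 ▸ (hg2.continuousAt.continuousWithinAt).tendsto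
  exact tendsto_nhds_unique (t1.congr' heq) t2

end Rep

lemma rep_of_order {hm : MeromorphicAt f x₀} (h : meromorphicOrderAt f x₀ = (k : WithTop ℤ)) :
    ∃ b, b ≠ 0 ∧ Rep x₀ f k b := by
  obtain ⟨g, hg, hgx, hev⟩ := (meromorphicOrderAt_eq_int_iff (n := k) hm).mp h
  exact ⟨g x₀, hgx, g, hg, rfl, by simpa [smul_eq_mul] using hev⟩

lemma rep_integrate (hm : MeromorphicAt f x₀) (hd : Rep x₀ (deriv f) l c)
    (hc : c ≠ 0) (hl : l ≤ -2) : Rep x₀ f (l + 1) (c / ((l : ℂ) + 1)) := by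
  have hne : meromorphicOrderAt f x₀ ≠ ⊤ := by
    intro htop
    have hz : ∀ᶠ z in 𝓝[≠] x₀, f z = 0 := meromorphicOrderAt_eq_top_iff.mp htop
    have hz' : ∀ᶠ z in 𝓝[≠] x₀, deriv f z = deriv (fun _ : ℂ => (0 : ℂ)) z :=
      deriv_congr_punctured (by simpa using hz)
    have hz'' : ∀ᶠ z in 𝓝[≠] x₀, deriv f z = 0 := by
      filter_upwards [hz'] with z h1; simpa using h1
    exact hd.ne_all_zero hc hz''
  obtain ⟨k, hk⟩ := WithTop.ne_top_iff_exists.mp hne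
  obtain ⟨b, hb, hrep⟩ := rep_of_order (hm := hm) hk.symm
  by_cases hk0 : k = 0
  · exfalso
    subst hk0
    obtain ⟨g, hg, hgx, hev⟩ := hrep
    have hfg : ∀ᶠ z in 𝓝[≠] x₀, f z = g z := by
      filter_upwards [hev] with z h1; simpa using h1
    have hdg : Rep x₀ (deriv g) l c := hd.congr (deriv_congr_punctured hfg)
    obtain ⟨G, hG, hGx, hevd⟩ := hdg
    have e : ℕ := (-l).toNat
    have key : ∀ᶠ z in 𝓝[≠] x₀, (z - x₀) ^ (-l).toNat * deriv g z = G z := by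
      filter_upwards [hevd, self_mem_nhdsWithin] with z h1 hz
      have hzx : z - x₀ ≠ 0 := sub_ne_zero.mpr hz
      rw [h1, ← mul_assoc, ← zpow_natCast (z - x₀) (-l).toNat, ← zpow_add₀ hzx]
      have : ((-l).toNat : ℤ) + l = 0 := by omega
      rw [this, zpow_zero, one_mul]
    have t1 : Tendsto (fun z => (z - x₀) ^ (-l).toNat * deriv g z) (𝓝[≠] x₀) (𝓝 0) := by
      have hc1 : ContinuousAt (fun z : ℂ => (z - x₀) ^ (-l).toNat * deriv g z) x₀ := by
        exact ((continuousAt_id.sub continuousAt_const).pow _).mul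
          (analyticAt_deriv hg).continuousAt
      have hval : (x₀ - x₀) ^ (-l).toNat * deriv g x₀ = 0 := by
        simp [zero_pow (show (-l).toNat ≠ 0 by omega)]
      have h2 : Tendsto (fun z : ℂ => (z - x₀) ^ (-l).toNat * deriv g z) (𝓝 x₀)
          (𝓝 ((x₀ - x₀) ^ (-l).toNat * deriv g x₀)) := hc1.tendsto
      rw [hval] at h2
      exact h2.mono_left nhdsWithin_le_nhds
    have t2 : Tendsto (fun z => (z - x₀) ^ (-l).toNat * deriv g z) (𝓝[≠] x₀) (𝓝 c) := by
      have : Tendsto G (𝓝[≠] x₀) (𝓝 c) := hGx ▸ hG.continuousAt.continuousWithinAt.tendsto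
      exact this.congr' (key.mono fun z hz => hz.symm)
    exact hc (tendsto_nhds_unique t1 t2).symm
  · have hd2 := hrep.deriv
    have hmd : MeromorphicAt (deriv f) x₀ := hd.meromorphicAt
    have o1 : meromorphicOrderAt (deriv f) x₀ = ((k - 1 : ℤ) : WithTop ℤ) :=
      hd2.order_eq (mul_ne_zero (Int.cast_ne_zero.mpr hk0) hb) hmd
    have o2 : meromorphicOrderAt (deriv f) x₀ = (l : WithTop ℤ) := hd.order_eq hc hmd
    have hkl : k - 1 = l := by rw [o1] at o2; exact_mod_cast o2
    have hval : (k : ℂ) * b = c := hd2.val_unique (by rw [hkl]; exact hd)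
    refine hrep.cast (by omega) ?_
    have hk1 : (l : ℂ) + 1 = (k : ℂ) := by push_cast [← hkl]; ring
    rw [hk1, ← hval, mul_comm, mul_div_assoc, div_self (Int.cast_ne_zero.mpr hk0 : (k:ℂ) ≠ 0), mul_one]

end AGKdVAux


namespace AGKdVAux

variable {x₀ : ℂ} {q φ : ℂ → ℂ} {μ : ℤ} {a b : ℂ}

/-- The stationary KdV operator applied to `φ`. -/
def Rop (q φ : ℂ → ℂ) : ℂ → ℂ :=
  fun x => iteratedDeriv 3 φ x + 4 * q x * deriv φ x + 2 * deriv q x * φ x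

lemma iteratedDeriv_three (φ : ℂ → ℂ) :
    iteratedDeriv 3 φ = deriv (deriv (deriv φ)) := by
  simp [iteratedDeriv_succ, iteratedDeriv_zero]

lemma rep_third (hf : Rep x₀ φ μ b) :
    Rep x₀ (iteratedDeriv 3 φ) (μ - 3) ((μ : ℂ) * ((μ : ℂ) - 1) * ((μ : ℂ) - 2) * b) := by
  have h3 := hf.deriv.deriv.deriv
  rw [iteratedDeriv_three]
  exact h3.cast (by omega) (by push_cast; ring)

lemma rep_R2 (hq : Rep x₀ q (-2) a) (hf : Rep x₀ φ μ b) :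
    Rep x₀ (Rop q φ) (μ - 3)
      (b * ((μ : ℂ) * ((μ : ℂ) - 1) * ((μ : ℂ) - 2) + 4 * a * (μ : ℂ) - 4 * a)) := by
  have h3 := rep_third hf
  have hT2 : Rep x₀ (fun x => 4 * (q x * deriv φ x)) (μ - 3) (4 * (a * ((μ : ℂ) * b))) :=
    ((hq.mul hf.deriv).const_mul 4).cast (by omega) rfl
  have hT3 : Rep x₀ (fun x => 2 * (deriv q x * φ x)) (μ - 3)
      (2 * ((((-2 : ℤ) : ℂ) * a) * b)) :=
    ((hq.deriv.mul hf).const_mul 2).cast (by omega) rfl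
  have hsum := (h3.add hT2).add hT3
  refine (hsum.cast rfl (by push_cast; ring)).congr ?_
  exact Eventually.of_forall fun z => by simp only [Rop]; ring

lemma rep_R1 (hq : Rep x₀ q (-1) a) (hf : Rep x₀ φ μ b) :
    Rep x₀ (Rop q φ) (μ - 3) ((μ : ℂ) * ((μ : ℂ) - 1) * ((μ : ℂ) - 2) * b) := by
  have h3 := rep_third hf
  have hT2 : Rep x₀ (fun x => 4 * (q x * deriv φ x)) (μ - 3) 0 :=
    ((hq.mul hf.deriv).const_mul 4).lower (by omega)
  have hT3 : Rep x₀ (fun x => 2 * (deriv q x * φ x)) (μ - 3) 0 :=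
    ((hq.deriv.mul hf).const_mul 2).lower (by omega)
  have hsum := (h3.add hT2).add hT3
  refine (hsum.cast rfl (by push_cast; ring)).congr ?_
  exact Eventually.of_forall fun z => by simp only [Rop]; ring

lemma rep_Rbig {m : ℕ} (hm : 3 ≤ m) (hq : Rep x₀ q (-(m : ℤ)) a) (hf : Rep x₀ φ μ b) :
    Rep x₀ (Rop q φ) (μ - (m : ℤ) - 1) (2 * a * b * (2 * (μ : ℂ) - (m : ℂ))) := by
  have h3 : Rep x₀ (iteratedDeriv 3 φ) (μ - (m : ℤ) - 1) 0 :=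
    (rep_third hf).lower (by omega)
  have hT2 : Rep x₀ (fun x => 4 * (q x * deriv φ x)) (μ - (m : ℤ) - 1)
      (4 * (a * ((μ : ℂ) * b))) :=
    ((hq.mul hf.deriv).const_mul 4).cast (by omega) rfl
  have hT3 : Rep x₀ (fun x => 2 * (deriv q x * φ x)) (μ - (m : ℤ) - 1)
      (2 * ((((-(m : ℤ)) : ℂ) * a) * b)) :=
    ((hq.deriv.mul hf).const_mul 2).cast (by omega) (by push_cast; ring)
  have hsum := (h3.add hT2).add hT3
  refine (hsum.cast rfl (by push_cast; ring)).congr ?_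
  exact Eventually.of_forall fun z => by simp only [Rop]; ring

lemma rep_R0 (h1 : ∀ x, φ x = 1) {l : ℤ} {c : ℂ} (hq' : Rep x₀ (deriv q) l c) :
    Rep x₀ (Rop q φ) l (2 * c) := by
  have hφ : φ = fun _ => 1 := funext h1
  have hR : Rop q φ = fun x => 2 * deriv q x := by
    funext x
    simp [Rop, hφ, iteratedDeriv_three, deriv_const']
  rw [hR]
  exact hq'.const_mul 2

lemma poly_zero {N : ℕ} {c : ℕ → ℂ}
    (h : ∀ z : ℂ, ∑ k ∈ Finset.range N, c k * z ^ k = 0) :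
    ∀ k, k < N → c k = 0 := by
  intro k hk
  set p : Polynomial ℂ := ∑ i ∈ Finset.range N, Polynomial.C (c i) * Polynomial.X ^ i with hp
  have hev : ∀ z, p.eval z = 0 := by
    intro z
    rw [hp]
    simpa [Polynomial.eval_finset_sum] using h z
  have hp0 : p = 0 := Polynomial.funext (by simp [hev])
  have hcoeff : p.coeff k = c k := by
    rw [hp, Polynomial.finset_sum_coeff]
    simp only [Polynomial.coeff_C_mul, Polynomial.coeff_X_pow]
    rw [Finset.sum_eq_single k]
    · simp
    · intro i _ hik; simp [Ne.symm hik]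
    · intro hknot; exact absurd (Finset.mem_range.mpr hk) hknot
  rw [hp0] at hcoeff
  simpa using hcoeff.symm

lemma coeff_extract (n : ℕ) (A B C : ℕ → ℂ) (qx dqx : ℂ)
    (h : ∀ z : ℂ, (∑ j ∈ Finset.range (n + 1), A (n - j) * z ^ j)
      + 4 * (qx - z) * (∑ j ∈ Finset.range (n + 1), B (n - j) * z ^ j)
      + 2 * dqx * (∑ j ∈ Finset.range (n + 1), C (n - j) * z ^ j) = 0) :
    (∀ i, i < n → A i + 4 * qx * B i + 2 * dqx * C i = 4 * B (i + 1)) ∧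
      A n + 4 * qx * B n + 2 * dqx * C n = 0 := by
  set c : ℕ → ℂ := fun k =>
      (if k ≤ n then A (n - k) + 4 * qx * B (n - k) + 2 * dqx * C (n - k) else 0)
      - (if k = 0 then 0 else 4 * B (n - (k - 1))) with hc
  have hsum : ∀ z : ℂ, ∑ k ∈ Finset.range (n + 2), c k * z ^ k = 0 := by
    intro z
    have e1 : ∑ k ∈ Finset.range (n + 2),
        (if k ≤ n then A (n - k) + 4 * qx * B (n - k) + 2 * dqx * C (n - k) else 0) * z ^ k
        = ∑ k ∈ Finset.range (n + 1),
          (A (n - k) + 4 * qx * B (n - k) + 2 * dqx * C (n - k)) * z ^ k := by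
      rw [Finset.sum_range_succ, if_neg (by omega), zero_mul, add_zero]
      refine Finset.sum_congr rfl fun k hk => ?_
      rw [if_pos (by simpa [Nat.lt_succ_iff] using Finset.mem_range.mp hk)]
    have e2 : ∑ k ∈ Finset.range (n + 2),
        (if k = 0 then 0 else 4 * B (n - (k - 1))) * z ^ k
        = ∑ j ∈ Finset.range (n + 1), 4 * B (n - j) * z ^ (j + 1) := by
      rw [Finset.sum_range_succ' (fun k => (if k = 0 then (0:ℂ) else 4 * B (n - (k - 1))) * z ^ k)]
      simp [Nat.add_sub_cancel]
    have expand : ∑ k ∈ Finset.range (n + 2), c k * z ^ k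
        = (∑ k ∈ Finset.range (n + 1),
            (A (n - k) + 4 * qx * B (n - k) + 2 * dqx * C (n - k)) * z ^ k)
          - ∑ j ∈ Finset.range (n + 1), 4 * B (n - j) * z ^ (j + 1) := by
      rw [← e1, ← e2, ← Finset.sum_sub_distrib]
      refine Finset.sum_congr rfl fun k _ => ?_
      rw [hc]; ring
    have k1 : ∑ k ∈ Finset.range (n + 1),
        (A (n - k) + 4 * qx * B (n - k) + 2 * dqx * C (n - k)) * z ^ k
        = (∑ k ∈ Finset.range (n + 1), A (n - k) * z ^ k)
          + 4 * qx * (∑ k ∈ Finset.range (n + 1), B (n - k) * z ^ k)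
          + 2 * dqx * (∑ k ∈ Finset.range (n + 1), C (n - k) * z ^ k) := by
      rw [Finset.mul_sum, Finset.mul_sum, ← Finset.sum_add_distrib, ← Finset.sum_add_distrib]
      exact Finset.sum_congr rfl fun k _ => by ring
    have k2 : ∑ j ∈ Finset.range (n + 1), 4 * B (n - j) * z ^ (j + 1)
        = 4 * z * ∑ j ∈ Finset.range (n + 1), B (n - j) * z ^ j := by
      rw [Finset.mul_sum]
      exact Finset.sum_congr rfl fun k _ => by ring
    rw [expand, k1, k2]
    linear_combination h z
  have hzero := poly_zero hsum
  constructor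
  · intro i hi
    have hz := hzero (n - i) (by omega)
    rw [hc] at hz
    simp only [if_pos (show n - i ≤ n by omega), if_neg (show ¬(n - i = 0) by omega)] at hz
    have eA : n - (n - i) = i := by omega
    have eB : n - (n - i - 1) = i + 1 := by omega
    rw [eA, eB] at hz
    linear_combination hz
  · have hz := hzero 0 (by omega)
    rw [hc] at hz
    simp only [if_pos (Nat.zero_le n), Nat.sub_zero, if_true, eq_self_iff_true, sub_zero] at hz
    linear_combination hz

end AGKdVAux

namespace AGKdVAux

variable {x₀ : ℂ} {q : ℂ → ℂ} {a : ℂ} {n : ℕ} {f : ℕ → ℂ → ℂ}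

lemma rep_base {φ : ℂ → ℂ} (hf0 : ∀ x, φ x = 1) : Rep x₀ φ 0 1 :=
  ⟨fun _ => 1, analyticAt_const, rfl, Eventually.of_forall fun z => by rw [hf0]; simp⟩

lemma step_lemma {j : ℕ} {ν : ℤ} {L : ℂ}
    (hmer : MeromorphicAt (f (j + 1)) x₀)
    (hrec : ∀ᶠ x in 𝓝[≠] x₀, Rop q (f j) x = 4 * deriv (f (j + 1)) x)
    (hRop : Rep x₀ (Rop q (f j)) ν L) (hL : L ≠ 0) (hν : ν ≤ -2) :
    Rep x₀ (f (j + 1)) (ν + 1) (L / 4 / ((ν : ℂ) + 1)) ∧ L / 4 / ((ν : ℂ) + 1) ≠ 0 := by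
  have hcon : Rep x₀ (fun x => 4 * deriv (f (j + 1)) x) ν L := hRop.congr hrec
  have hd : Rep x₀ (deriv (f (j + 1))) ν (L / 4) := hcon.of_const_mul (by norm_num)
  have hL4 : L / 4 ≠ 0 := div_ne_zero hL (by norm_num)
  have hν1 : ((ν : ℂ) + 1) ≠ 0 := by
    have h' : ((ν + 1 : ℤ) : ℂ) ≠ 0 := Int.cast_ne_zero.mpr (by omega)
    push_cast at h'
    exact h'
  exact ⟨rep_integrate hmer hd hL4 hν, div_ne_zero hL4 hν1⟩

/-- Pole of order `1` is impossible. -/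
lemma exclude_one (ha : a ≠ 0) (hq1 : Rep x₀ q (-1) a)
    (hf0 : ∀ x, f 0 x = 1)
    (hmf : ∀ j, j ≤ n → MeromorphicAt (f j) x₀)
    (hRec : ∀ i, i < n → ∀ᶠ x in 𝓝[≠] x₀, Rop q (f i) x = 4 * deriv (f (i + 1)) x)
    (hTop : ∀ᶠ x in 𝓝[≠] x₀, Rop q (f n) x = 0) : False := by
  have hR0 : Rep x₀ (Rop q (f 0)) (-2) (-2 * a) := by
    have := rep_R0 hf0 hq1.deriv
    exact this.cast (by omega) (by push_cast; ring)
  have hR0ne : (-2 : ℂ) * a ≠ 0 := mul_ne_zero (by norm_num) ha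
  rcases Nat.eq_zero_or_pos n with hn | hn
  · subst hn
    exact hR0.ne_all_zero hR0ne hTop
  -- n ≥ 1 : induction
  have key : ∀ j, 1 ≤ j → j ≤ n → ∃ b, b ≠ 0 ∧ Rep x₀ (f j) (1 - 2 * (j : ℤ)) b := by
    intro j
    induction j with
    | zero => omega
    | succ j ih =>
      intro _ hj
      rcases Nat.eq_zero_or_pos j with hj0 | hj1
      · subst hj0
        have hstep := step_lemma (hmf 1 (by omega)) (hRec 0 (by omega)) hR0 hR0ne (by omega)
        exact ⟨_, hstep.2, (hstep.1).cast (by omega) rfl⟩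
      · obtain ⟨b, hb, hrep⟩ := ih hj1 (by omega)
        set μ : ℤ := 1 - 2 * (j : ℤ) with hμ
        have hR := rep_R1 hq1 hrep
        have hLne : (μ : ℂ) * ((μ : ℂ) - 1) * ((μ : ℂ) - 2) * b ≠ 0 := by
          have h1 : ((μ : ℤ) : ℂ) ≠ 0 := Int.cast_ne_zero.mpr (by omega)
          have h2 : ((μ : ℂ) - 1) ≠ 0 := by
            have : ((μ - 1 : ℤ) : ℂ) ≠ 0 := Int.cast_ne_zero.mpr (by omega)
            push_cast at this; exact this
          have h3 : ((μ : ℂ) - 2) ≠ 0 := by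
            have : ((μ - 2 : ℤ) : ℂ) ≠ 0 := Int.cast_ne_zero.mpr (by omega)
            push_cast at this; exact this
          exact mul_ne_zero (mul_ne_zero (mul_ne_zero h1 h2) h3) hb
        have hstep := step_lemma (hmf (j + 1) hj) (hRec j (by omega)) hR hLne (by omega)
        refine ⟨_, hstep.2, (hstep.1).cast (by push_cast; ring) rfl⟩
  obtain ⟨b, hb, hrep⟩ := key n hn le_rfl
  set μ : ℤ := 1 - 2 * (n : ℤ) with hμ
  have hR := rep_R1 hq1 hrep
  have hLne : (μ : ℂ) * ((μ : ℂ) - 1) * ((μ : ℂ) - 2) * b ≠ 0 := by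
    have h1 : ((μ : ℤ) : ℂ) ≠ 0 := Int.cast_ne_zero.mpr (by omega)
    have h2 : ((μ : ℂ) - 1) ≠ 0 := by
      have : ((μ - 1 : ℤ) : ℂ) ≠ 0 := Int.cast_ne_zero.mpr (by omega)
      push_cast at this; exact this
    have h3 : ((μ : ℂ) - 2) ≠ 0 := by
      have : ((μ - 2 : ℤ) : ℂ) ≠ 0 := Int.cast_ne_zero.mpr (by omega)
      push_cast at this; exact this
    exact mul_ne_zero (mul_ne_zero (mul_ne_zero h1 h2) h3) hb
  exact hR.ne_all_zero hLne hTop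

/-- Pole of order `≥ 3` is impossible. -/
lemma exclude_big {m : ℕ} (hm : 3 ≤ m) (ha : a ≠ 0) (hqm : Rep x₀ q (-(m : ℤ)) a)
    (hf0 : ∀ x, f 0 x = 1)
    (hmf : ∀ j, j ≤ n → MeromorphicAt (f j) x₀)
    (hRec : ∀ i, i < n → ∀ᶠ x in 𝓝[≠] x₀, Rop q (f i) x = 4 * deriv (f (i + 1)) x)
    (hTop : ∀ᶠ x in 𝓝[≠] x₀, Rop q (f n) x = 0) : False := by
  have hmain : ∀ j : ℕ, (2 * (-(j : ℤ) * (m : ℤ)) - (m : ℤ)) ≠ 0 := by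
    intro j
    have h1 : (0 : ℤ) ≤ (j : ℤ) * (m : ℤ) := mul_nonneg (by positivity) (by positivity)
    have h2 : -(j : ℤ) * (m : ℤ) = -((j : ℤ) * (m : ℤ)) := by ring
    intro heq
    omega
  have hval : ∀ (j : ℕ) (b : ℂ), b ≠ 0 →
      2 * a * b * (2 * ((-(j : ℤ) * (m : ℤ) : ℤ) : ℂ) - (m : ℂ)) ≠ 0 := by
    intro j b hb
    have : (2 * ((-(j : ℤ) * (m : ℤ) : ℤ) : ℂ) - (m : ℂ)) = ((2 * (-(j : ℤ) * (m : ℤ)) - (m : ℤ) : ℤ) : ℂ) := by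
      push_cast; ring
    rw [this]
    exact mul_ne_zero (mul_ne_zero (mul_ne_zero (by norm_num) ha) hb)
      (Int.cast_ne_zero.mpr (hmain j))
  have key : ∀ j, j ≤ n → ∃ b, b ≠ 0 ∧ Rep x₀ (f j) (-(j : ℤ) * (m : ℤ)) b := by
    intro j
    induction j with
    | zero => exact fun _ => ⟨1, one_ne_zero, (rep_base hf0).cast (by omega) rfl⟩
    | succ j ih =>
      intro hj
      obtain ⟨b, hb, hrep⟩ := ih (by omega)
      have hR := rep_Rbig hm hqm hrep
      have h1 : (0 : ℤ) ≤ (j : ℤ) * (m : ℤ) := mul_nonneg (by positivity) (by positivity)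
      have h2 : -(j : ℤ) * (m : ℤ) = -((j : ℤ) * (m : ℤ)) := by ring
      have hstep := step_lemma (hmf (j + 1) hj) (hRec j (by omega)) hR
        (hval j b hb) (by omega)
      refine ⟨_, hstep.2, (hstep.1).cast ?_ rfl⟩
      push_cast
      ring
  obtain ⟨b, hb, hrep⟩ := key n le_rfl
  exact (rep_Rbig hm hqm hrep).ne_all_zero (hval n b hb) hTop

/-- Pole of order `2`: the leading coefficient is `-s(s+1)`. -/
lemma main_two (ha : a ≠ 0) (hq2 : Rep x₀ q (-2) a)
    (hf0 : ∀ x, f 0 x = 1)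
    (hmf : ∀ j, j ≤ n → MeromorphicAt (f j) x₀)
    (hRec : ∀ i, i < n → ∀ᶠ x in 𝓝[≠] x₀, Rop q (f i) x = 4 * deriv (f (i + 1)) x)
    (hTop : ∀ᶠ x in 𝓝[≠] x₀, Rop q (f n) x = 0) :
    ∃ s : ℕ, 0 < s ∧ a = -((s : ℂ) * ((s : ℂ) + 1)) := by
  by_contra hnot
  push_neg at hnot
  have haj : ∀ j : ℕ, (j : ℂ) * (j : ℂ) + (j : ℂ) + a ≠ 0 := by
    intro j heq
    rcases Nat.eq_zero_or_pos j with hj | hj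
    · subst hj; simp at heq; exact ha heq
    · exact hnot j hj (by linear_combination heq)
  have hval : ∀ (j : ℕ) (b : ℂ), b ≠ 0 →
      b * (-4) * (2 * (j : ℂ) + 1) * ((j : ℂ) * (j : ℂ) + (j : ℂ) + a) ≠ 0 := by
    intro j b hb
    have h2j : (2 * (j : ℂ) + 1) ≠ 0 := by
      have : ((2 * j + 1 : ℕ) : ℂ) ≠ 0 := Nat.cast_ne_zero.mpr (by omega)
      push_cast at this
      exact this
    exact mul_ne_zero (mul_ne_zero (mul_ne_zero hb (by norm_num)) h2j) (haj j)
  have hKcast : ∀ (j : ℕ) (b : ℂ),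
      b * (((-2 * (j : ℤ) : ℤ) : ℂ) * (((-2 * (j : ℤ) : ℤ) : ℂ) - 1) * (((-2 * (j : ℤ) : ℤ) : ℂ) - 2)
        + 4 * a * ((-2 * (j : ℤ) : ℤ) : ℂ) - 4 * a)
      = b * (-4) * (2 * (j : ℂ) + 1) * ((j : ℂ) * (j : ℂ) + (j : ℂ) + a) := by
    intro j b
    push_cast
    ring
  have key : ∀ j, j ≤ n → ∃ b, b ≠ 0 ∧ Rep x₀ (f j) (-2 * (j : ℤ)) b := by
    intro j
    induction j with
    | zero => exact fun _ => ⟨1, one_ne_zero, (rep_base hf0).cast (by omega) rfl⟩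
    | succ j ih =>
      intro hj
      obtain ⟨b, hb, hrep⟩ := ih (by omega)
      have hR := (rep_R2 hq2 hrep).cast rfl (hKcast j b)
      have hstep := step_lemma (hmf (j + 1) hj) (hRec j (by omega)) hR
        (hval j b hb) (by omega)
      refine ⟨_, hstep.2, (hstep.1).cast (by push_cast; ring) rfl⟩
  obtain ⟨b, hb, hrep⟩ := key n le_rfl
  exact ((rep_R2 hq2 hrep).cast rfl (hKcast n b)).ne_all_zero (hval n b hb) hTop

end AGKdVAux

/-- **Pole structure of algebro-geometric KdV potentials.** Every pole `x₀` of an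
algebro-geometric KdV potential `q` is a pole of order exactly `2`, and the leading Laurent
coefficient is `−s(s+1)` for some positive integer `s`, i.e.
`(x − x₀)² q(x) → −s(s+1)` as `x → x₀`. -/
theorem agkdv_pole_structure
    (q : ℂ → ℂ) (hq : IsAGKdVPotential q)
    (x₀ : ℂ) (hpole : meromorphicOrderAt q x₀ < 0) :
    meromorphicOrderAt q x₀ = ((-2 : ℤ) : WithTop ℤ) ∧
    ∃ s : ℕ, 0 < s ∧
      Filter.Tendsto (fun x => (x - x₀) ^ 2 * q x) (nhdsWithin x₀ {x₀}ᶜ)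
        (nhds (-((s : ℂ) * ((s : ℂ) + 1)))) := by
  classical
  obtain ⟨n, f, hf0, hfm, hPDE⟩ := hq.2
  have hne : meromorphicOrderAt q x₀ ≠ ⊤ := by
    intro h
    rw [h] at hpole
    exact absurd hpole (by simp)
  obtain ⟨d, hd⟩ := WithTop.ne_top_iff_exists.mp hne
  have hdneg : d < 0 := by
    have h' := hpole
    rw [← hd] at h'
    exact_mod_cast h'
  obtain ⟨a, ha, hqrep⟩ := AGKdVAux.rep_of_order (hm := hq.1 x₀ (Set.mem_univ x₀)) hd.symm
  set m : ℕ := (-d).toNat with hm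
  have hdm : d = -(m : ℤ) := by omega
  have hqm : AGKdVAux.Rep x₀ q (-(m : ℤ)) a := hdm ▸ hqrep
  have hm1 : 1 ≤ m := by omega
  have hEq := ((hq.1) x₀ (Set.mem_univ x₀)).eventually_analyticAt
  have hEf : ∀ᶠ x in 𝓝[≠] x₀, ∀ j ≤ n, AnalyticAt ℂ (f j) x := by
    have h1 : ∀ j ∈ Finset.range (n + 1), ∀ᶠ x in 𝓝[≠] x₀, AnalyticAt ℂ (f j) x :=
      fun j hj => ((hfm j (by simpa [Nat.lt_succ_iff] using Finset.mem_range.mp hj)) x₀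
        (Set.mem_univ _)).eventually_analyticAt
    have h2 := (Filter.eventually_all_finset (Finset.range (n + 1))).mpr h1
    filter_upwards [h2] with x hx j hj
    exact hx j (Finset.mem_range.mpr (by omega))
  have hAll : ∀ᶠ x in 𝓝[≠] x₀,
      (∀ i, i < n → AGKdVAux.Rop q (f i) x = 4 * deriv (f (i + 1)) x) ∧
        AGKdVAux.Rop q (f n) x = 0 := by
    filter_upwards [hEq, hEf] with x hqx hfx
    have h := AGKdVAux.coeff_extract n (fun i => iteratedDeriv 3 (f i) x)
        (fun i => deriv (f i) x) (fun i => f i x) (q x) (deriv q x)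
        (fun z => hPDE z x hqx hfx)
    exact ⟨fun i hi => h.1 i hi, h.2⟩
  have hRec : ∀ i, i < n →
      ∀ᶠ x in 𝓝[≠] x₀, AGKdVAux.Rop q (f i) x = 4 * deriv (f (i + 1)) x :=
    fun i hi => hAll.mono fun x hx => hx.1 i hi
  have hTop : ∀ᶠ x in 𝓝[≠] x₀, AGKdVAux.Rop q (f n) x = 0 := hAll.mono fun x hx => hx.2
  have hmf : ∀ j, j ≤ n → MeromorphicAt (f j) x₀ := fun j hj => hfm j hj x₀ (Set.mem_univ _)
  have hm2 : m = 2 := by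
    by_contra hm2
    rcases Nat.lt_or_ge m 3 with h3 | h3
    · have hme : m = 1 := by omega
      have hq1 : AGKdVAux.Rep x₀ q (-1) a := hqm.cast (by rw [hme]; norm_num) rfl
      exact AGKdVAux.exclude_one ha hq1 hf0 hmf hRec hTop
    · exact AGKdVAux.exclude_big h3 ha hqm hf0 hmf hRec hTop
  have hq2 : AGKdVAux.Rep x₀ q (-2) a := hqm.cast (by rw [hm2]; norm_num) rfl
  obtain ⟨s, hs, hsa⟩ := AGKdVAux.main_two ha hq2 hf0 hmf hRec hTop
  constructor
  · have hd2 : d = -2 := by omega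
    rw [← hd, hd2]
  · refine ⟨s, hs, ?_⟩
    obtain ⟨Q, hQ, hQx, hev⟩ := hq2
    have key : ∀ᶠ z in 𝓝[≠] x₀, (z - x₀) ^ 2 * q z = Q z := by
      filter_upwards [hev, self_mem_nhdsWithin] with z h1 h2
      have hzx : z - x₀ ≠ 0 := sub_ne_zero.mpr h2
      rw [h1, ← mul_assoc, ← zpow_natCast (z - x₀) 2, ← zpow_add₀ hzx]
      norm_num
    have ht : Filter.Tendsto (fun z => (z - x₀) ^ 2 * q z) (𝓝[≠] x₀) (𝓝 (Q x₀)) :=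
      (hQ.continuousAt.continuousWithinAt.tendsto).congr' (key.mono fun z h => h.symm)
    rw [hQx, hsa] at ht
    exact ht
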